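/- arXiv:hep-th/0103254 — 2 statements merged into one kernel-verified Lean document; each statement's English description precedes it below -/
import Mathlib

section
/- Fix a real number z ≠ 0 and define S₀(t⁰,t¹) = exp(t⁰/z)·∑_{m≥0} exp(m·t¹)/((m!)²·z^{2m}) and S₁(t⁰,t¹) = exp(t⁰/z)·∑_{m≥0} exp((m+1)·t¹)/(m!·(m+1)!·z^{2m+1}) (these series converge for all real t⁰, t¹). Then S₀ and S₁ form a flat section of the genus-0 Frobenius structure of ℙ¹: for all (t⁰,t¹) ∈ ℝ², z·∂S₀/∂t⁰ = S₀, z·∂S₀/∂t¹ = S₁, z·∂S₁/∂t⁰ = S₁, and z·∂S₁/∂t¹ = exp(t¹)·S₀. -/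
/-- `S₀(t⁰,t¹) = exp(t⁰/z) · ∑_{m≥0} exp(m·t¹)/((m!)²·z^{2m})`. -/
noncomputable def S0 (z t0 t1 : ℝ) : ℝ :=
  Real.exp (t0 / z) *
    ∑' m : ℕ, Real.exp ((m : ℝ) * t1) / (((Nat.factorial m : ℝ)) ^ 2 * z ^ (2 * m))

/-- `S₁(t⁰,t¹) = exp(t⁰/z) · ∑_{m≥0} exp((m+1)·t¹)/(m!·(m+1)!·z^{2m+1})`. -/
noncomputable def S1 (z t0 t1 : ℝ) : ℝ :=
  Real.exp (t0 / z) *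
    ∑' m : ℕ, Real.exp (((m : ℝ) + 1) * t1) /
      ((Nat.factorial m : ℝ) * (Nat.factorial (m + 1) : ℝ) * z ^ (2 * m + 1))

noncomputable def c0 (m : ℕ) : ℝ := 1 / ((Nat.factorial m : ℝ)) ^ 2

noncomputable def c1 (m : ℕ) : ℝ :=
  1 / ((Nat.factorial m : ℝ) * (Nat.factorial (m + 1) : ℝ))

lemma factR_pos (m : ℕ) : (0:ℝ) < (Nat.factorial m : ℝ) := by
  exact_mod_cast m.factorial_pos

lemma one_le_factR (m : ℕ) : (1:ℝ) ≤ (Nat.factorial m : ℝ) := by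
  exact_mod_cast Nat.one_le_iff_ne_zero.mpr m.factorial_ne_zero

lemma hc0 : ∀ m, |c0 m| ≤ 1 / (Nat.factorial m : ℝ) := by
  intro m
  rw [c0, abs_of_nonneg (by positivity)]
  rw [pow_two]
  apply div_le_div_of_nonneg_left one_pos.le (factR_pos m)
  exact le_mul_of_one_le_right (factR_pos m).le (one_le_factR m)

lemma hc1 : ∀ m, |c1 m| ≤ 1 / (Nat.factorial m : ℝ) := by
  intro m
  rw [c1, abs_of_nonneg (by positivity)]
  apply div_le_div_of_nonneg_left one_pos.le (factR_pos m)
  exact le_mul_of_one_le_right (factR_pos m).le (one_le_factR (m+1))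

lemma key_summable {c : ℕ → ℝ} (hc : ∀ m, |c m| ≤ 1 / (Nat.factorial m : ℝ)) (x : ℝ) :
    Summable fun m => c m * x ^ m := by
  apply Summable.of_norm
  refine Summable.of_nonneg_of_le (fun m => norm_nonneg _) (fun m => ?_)
    (Real.summable_pow_div_factorial |x|)
  rw [Real.norm_eq_abs, abs_mul, abs_pow]
  calc |c m| * |x| ^ m ≤ (1 / (Nat.factorial m : ℝ)) * |x| ^ m := by
        gcongr; exact hc m
    _ = |x| ^ m / (Nat.factorial m : ℝ) := by ring

lemma key_summable_deriv {c : ℕ → ℝ} (hc : ∀ m, |c m| ≤ 1 / (Nat.factorial m : ℝ)) (x : ℝ) :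
    Summable fun m => c m * (m:ℝ) * x ^ (m - 1) := by
  set R : ℝ := |x| + 1 with hR
  have hR1 : (1:ℝ) ≤ R := le_add_of_nonneg_left (abs_nonneg x)
  apply Summable.of_norm
  refine Summable.of_nonneg_of_le (fun m => norm_nonneg _) (fun m => ?_)
    (Real.summable_pow_div_factorial (2*R))
  rw [Real.norm_eq_abs, abs_mul, abs_mul, abs_pow, Nat.abs_cast]
  have h1 : |x| ^ (m-1) ≤ R ^ (m-1) := pow_le_pow_left₀ (abs_nonneg x) (by simp [hR]) _
  have h2 : R ^ (m-1) ≤ R ^ m := pow_le_pow_right₀ hR1 (Nat.sub_le m 1)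
  have h3 : (m:ℝ) ≤ 2 ^ m := by exact_mod_cast (Nat.lt_two_pow_self (n := m)).le
  calc |c m| * (m:ℝ) * |x| ^ (m-1)
      ≤ (1 / (Nat.factorial m : ℝ)) * 2 ^ m * R ^ m := by
        apply mul_le_mul _ (h1.trans h2) (by positivity) (by positivity)
        exact mul_le_mul (hc m) h3 (Nat.cast_nonneg m) (by positivity)
    _ = (2*R) ^ m / (Nat.factorial m : ℝ) := by rw [mul_pow]; ring

lemma key_deriv {c : ℕ → ℝ} (hc : ∀ m, |c m| ≤ 1 / (Nat.factorial m : ℝ)) (x : ℝ) :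
    HasDerivAt (fun y => ∑' m : ℕ, c m * y ^ m) (∑' m : ℕ, c m * (m:ℝ) * x ^ (m - 1)) x := by
  set R : ℝ := |x| + 1 with hR
  have hR1 : (1:ℝ) ≤ R := le_add_of_nonneg_left (abs_nonneg x)
  refine hasDerivAt_tsum_of_isPreconnected (u := fun m : ℕ => (2*R)^m / (Nat.factorial m : ℝ))
    (g' := fun m y => c m * (m:ℝ) * y ^ (m-1))
    (Real.summable_pow_div_factorial (2*R)) Metric.isOpen_ball
    (convex_ball (0:ℝ) R).isPreconnected (fun n y _ => ?_) (fun n y hy => ?_)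
    (y₀ := 0) ?_ ?_ ?_
  · simpa [mul_assoc] using (hasDerivAt_pow n y).const_mul (c n)
  · have hy' : |y| < R := by simpa [Real.dist_eq] using hy
    rw [Real.norm_eq_abs, abs_mul, abs_mul, abs_pow, Nat.abs_cast]
    have h1 : |y| ^ (n-1) ≤ R ^ (n-1) := pow_le_pow_left₀ (abs_nonneg y) hy'.le _
    have h2 : R ^ (n-1) ≤ R ^ n := pow_le_pow_right₀ hR1 (Nat.sub_le n 1)
    have h3 : (n:ℝ) ≤ 2 ^ n := by exact_mod_cast (Nat.lt_two_pow_self (n := n)).le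
    calc |c n| * (n:ℝ) * |y| ^ (n-1)
        ≤ (1 / (Nat.factorial n : ℝ)) * 2 ^ n * R ^ n := by
          apply mul_le_mul _ (h1.trans h2) (by positivity) (by positivity)
          exact mul_le_mul (hc n) h3 (Nat.cast_nonneg n) (by positivity)
      _ = (2*R) ^ n / (Nat.factorial n : ℝ) := by rw [mul_pow]; ring
  · simpa [Real.dist_eq] using (by positivity : (0:ℝ) < R)
  · exact key_summable hc 0
  · simpa [Real.dist_eq, hR] using lt_add_one |x|

lemma idA (x : ℝ) : (∑' m : ℕ, c0 m * (m:ℝ) * x ^ (m-1)) = ∑' m : ℕ, c1 m * x ^ m := by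
  rw [Summable.tsum_eq_zero_add (key_summable_deriv hc0 x)]
  simp only [Nat.cast_zero, mul_zero, zero_mul, zero_add]
  apply tsum_congr
  intro k
  rw [c0, c1, Nat.factorial_succ]
  have : k + 1 - 1 = k := rfl
  rw [this]
  have hk : (0:ℝ) < (Nat.factorial k : ℝ) := factR_pos k
  push_cast
  field_simp

lemma idB (x : ℝ) :
    (∑' m : ℕ, c1 m * x ^ m) + x * (∑' m : ℕ, c1 m * (m:ℝ) * x ^ (m-1))
      = ∑' m : ℕ, c0 m * x ^ m := by
  rw [← tsum_mul_left, ← Summable.tsum_add (key_summable hc1 x) ((key_summable_deriv hc1 x).mul_left x)]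
  apply tsum_congr
  intro m
  match m with
  | 0 => simp [c0, c1]
  | (k+1) =>
    rw [c0, c1]
    have h1 : k + 1 - 1 = k := rfl
    rw [h1, Nat.factorial_succ (k+1), Nat.factorial_succ k]
    have hk : (0:ℝ) < (Nat.factorial k : ℝ) := factR_pos k
    push_cast
    rw [pow_succ]
    field_simp
    ring

lemma term0 (z t1 : ℝ) (m : ℕ) :
    c0 m * (Real.exp t1 / z ^ 2) ^ m
      = Real.exp ((m : ℝ) * t1) / (((Nat.factorial m : ℝ)) ^ 2 * z ^ (2 * m)) := by
  rw [c0, Real.exp_nat_mul, pow_mul, div_pow, div_mul_div_comm, one_mul]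

lemma term1 (z t1 : ℝ) (hz : z ≠ 0) (m : ℕ) :
    (Real.exp t1 / z) * (c1 m * (Real.exp t1 / z ^ 2) ^ m)
      = Real.exp (((m : ℝ) + 1) * t1) /
        ((Nat.factorial m : ℝ) * (Nat.factorial (m + 1) : ℝ) * z ^ (2 * m + 1)) := by
  rw [show ((m:ℝ)+1) = ((m+1:ℕ):ℝ) by push_cast; ring, Real.exp_nat_mul, c1,
    pow_succ z (2*m), pow_mul z 2 m, div_pow, pow_succ (Real.exp t1) m]
  have h1 : (Nat.factorial m : ℝ) ≠ 0 := (factR_pos m).ne'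
  have h2 : (Nat.factorial (m+1) : ℝ) ≠ 0 := (factR_pos (m+1)).ne'
  field_simp

/-- For any fixed real `z ≠ 0`, the series defining `S₀` and `S₁` converge for
all real `t⁰, t¹`, and `(S₀, S₁)` is a flat section of the genus-0 Frobenius
structure of ℙ¹: `z·∂S₀/∂t⁰ = S₀`, `z·∂S₀/∂t¹ = S₁`, `z·∂S₁/∂t⁰ = S₁`, and
`z·∂S₁/∂t¹ = exp(t¹)·S₀`. -/
theorem stmt4 (z : ℝ) (hz : z ≠ 0) :
    (∀ t1 : ℝ,
      Summable (fun m : ℕ =>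
        Real.exp ((m : ℝ) * t1) / (((Nat.factorial m : ℝ)) ^ 2 * z ^ (2 * m))) ∧
      Summable (fun m : ℕ =>
        Real.exp (((m : ℝ) + 1) * t1) /
          ((Nat.factorial m : ℝ) * (Nat.factorial (m + 1) : ℝ) * z ^ (2 * m + 1)))) ∧
    ∀ t0 t1 : ℝ,
      HasDerivAt (fun s => S0 z s t1) (S0 z t0 t1 / z) t0 ∧
      HasDerivAt (fun s => S0 z t0 s) (S1 z t0 t1 / z) t1 ∧
      HasDerivAt (fun s => S1 z s t1) (S1 z t0 t1 / z) t0 ∧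
      HasDerivAt (fun s => S1 z t0 s) (Real.exp t1 * S0 z t0 t1 / z) t1 := by
  constructor
  · intro t1
    exact ⟨(key_summable hc0 (Real.exp t1 / z^2)).congr (fun m => term0 z t1 m),
      ((key_summable hc1 (Real.exp t1 / z^2)).mul_left (Real.exp t1 / z)).congr
        (fun m => term1 z t1 hz m)⟩
  · intro t0 t1
    set x : ℝ := Real.exp t1 / z ^ 2 with hxdef
    have hS0 : ∀ s t : ℝ, S0 z s t = Real.exp (s / z) * ∑' m : ℕ, c0 m * (Real.exp t / z^2) ^ m := by
      intro s t
      rw [S0]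
      congr 1
      exact (tsum_congr fun m => term0 z t m).symm
    have hS1 : ∀ s t : ℝ, S1 z s t
        = Real.exp (s / z) * ((Real.exp t / z) * ∑' m : ℕ, c1 m * (Real.exp t / z^2) ^ m) := by
      intro s t
      rw [S1]
      congr 1
      rw [← tsum_mul_left]
      exact (tsum_congr fun m => term1 z t hz m).symm
    have hxd : HasDerivAt (fun s => Real.exp s / z ^ 2) (Real.exp t1 / z ^ 2) t1 :=
      (Real.hasDerivAt_exp t1).div_const (z ^ 2)
    refine ⟨?_, ?_, ?_, ?_⟩
    · -- ∂S0/∂t0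
      have h := (((hasDerivAt_id t0).div_const z).exp.mul_const
        (∑' m : ℕ, Real.exp ((m : ℝ) * t1) / (((Nat.factorial m : ℝ)) ^ 2 * z ^ (2 * m))))
      refine h.congr_deriv ?_
      simp only [S0, id_eq]
      ring
    · -- ∂S0/∂t1
      have hF := key_deriv hc0 x
      have hcomp := (HasDerivAt.comp t1 hF hxd).const_mul (Real.exp (t0 / z))
      have hfun : (fun s => S0 z t0 s)
          = fun s => Real.exp (t0 / z) *
              ((fun y => ∑' m : ℕ, c0 m * y ^ m) ∘ (fun s => Real.exp s / z ^ 2)) s :=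
        funext fun s => by simp only [Function.comp]; exact hS0 t0 s
      rw [hfun]
      refine hcomp.congr_deriv ?_
      rw [idA x, hS1 t0 t1, ← hxdef]
      ring
    · -- ∂S1/∂t0
      have h := (((hasDerivAt_id t0).div_const z).exp.mul_const
        (∑' m : ℕ, Real.exp (((m : ℝ) + 1) * t1) /
          ((Nat.factorial m : ℝ) * (Nat.factorial (m + 1) : ℝ) * z ^ (2 * m + 1))))
      refine h.congr_deriv ?_
      simp only [S1, id_eq]
      ring
    · -- ∂S1/∂t1
      have hP : HasDerivAt (fun s => Real.exp s / z) (Real.exp t1 / z) t1 :=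
        (Real.hasDerivAt_exp t1).div_const z
      have hQ : HasDerivAt ((fun y => ∑' m : ℕ, c1 m * y ^ m) ∘ (fun s => Real.exp s / z ^ 2))
          ((∑' m : ℕ, c1 m * (m:ℝ) * x ^ (m-1)) * (Real.exp t1 / z ^ 2)) t1 :=
        HasDerivAt.comp t1 (key_deriv hc1 x) hxd
      have h := (hP.mul hQ).const_mul (Real.exp (t0 / z))
      have hfun : (fun s => S1 z t0 s)
          = fun s => Real.exp (t0 / z) * ((Real.exp s / z) *
              ((fun y => ∑' m : ℕ, c1 m * y ^ m) ∘ (fun s => Real.exp s / z ^ 2)) s) :=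
        funext fun s => by simp only [Function.comp]; exact hS1 t0 s
      rw [hfun]
      refine h.congr_deriv ?_
      rw [hS0 t0 t1, ← hxdef]
      simp only [Function.comp]
      rw [← idB x, hxdef]
      ring
end

section
/- Fix a real number z ≠ 0 and let H_m = ∑_{k=1}^{m} 1/k denote the m-th harmonic number. Define S(t⁰,t¹) = (2/z)·exp(t⁰/z)·[ (t¹/2)·∑_{m≥0} exp(m·t¹)/((m!)²·z^{2m}) − ∑_{m≥1} H_m·exp(m·t¹)/((m!)²·z^{2m}) ] (the series converge for all real t⁰, t¹). Then for all (t⁰,t¹) ∈ ℝ²: z·∂S/∂t⁰ = S and z·∂/∂t¹(z·∂S/∂t¹) = exp(t¹)·S. (This is the first component S₀₀ of the second flat section, built from the modified Bessel function K₀.) -/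
/-- The `m`-th harmonic number `H_m = ∑_{k=1}^m 1/k` (with `H_0 = 0`). -/
noncomputable def harm (m : ℕ) : ℝ := ∑ k ∈ Finset.range m, 1 / ((k : ℝ) + 1)

/-- `S(t⁰,t¹) = (2/z)·exp(t⁰/z)·[(t¹/2)·∑_{m≥0} exp(m·t¹)/((m!)²·z^{2m})
  − ∑_{m≥1} H_m·exp(m·t¹)/((m!)²·z^{2m})]` (the `m = 0` term of the second
series vanishes since `H_0 = 0`). -/
noncomputable def Sk (z t0 t1 : ℝ) : ℝ :=
  (2 / z) * Real.exp (t0 / z) *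
    ((t1 / 2) * ∑' m : ℕ, Real.exp ((m : ℝ) * t1) / (((Nat.factorial m : ℝ)) ^ 2 * z ^ (2 * m))
      - ∑' m : ℕ, harm m * Real.exp ((m : ℝ) * t1) / (((Nat.factorial m : ℝ)) ^ 2 * z ^ (2 * m)))


noncomputable def ser (d : ℕ → ℝ) (t : ℝ) : ℝ := ∑' m : ℕ, d m * Real.exp ((m:ℝ) * t)

lemma summable_ser {d : ℕ → ℝ} {K : ℝ} (hd : ∀ m, |d m| ≤ K ^ m / (Nat.factorial m)) (t : ℝ) :
    Summable (fun m : ℕ => d m * Real.exp ((m:ℝ) * t)) := by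
  apply Summable.of_abs
  apply Summable.of_nonneg_of_le (fun m => abs_nonneg _) _
    (Real.summable_pow_div_factorial (K * Real.exp t))
  intro m
  rw [abs_mul, abs_of_pos (Real.exp_pos _), Real.exp_nat_mul, mul_pow]
  calc |d m| * Real.exp t ^ m ≤ (K ^ m / (Nat.factorial m)) * Real.exp t ^ m := by
        gcongr; exact hd m
    _ = K ^ m * Real.exp t ^ m / (Nat.factorial m) := by ring

lemma bound_mul {d : ℕ → ℝ} {K : ℝ} (hd : ∀ m, |d m| ≤ K ^ m / (Nat.factorial m))
    {g : ℕ → ℝ} (hg : ∀ m, |g m| ≤ 2 ^ m) (m : ℕ) :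
    |g m * d m| ≤ (2 * K) ^ m / (Nat.factorial m) := by
  rw [abs_mul, mul_pow]
  calc |g m| * |d m| ≤ 2 ^ m * (K ^ m / (Nat.factorial m)) :=
        mul_le_mul (hg m) (hd m) (abs_nonneg _) (by positivity)
    _ = 2 ^ m * K ^ m / (Nat.factorial m) := by ring

lemma nat_le_two_pow (m : ℕ) : |(m : ℝ)| ≤ 2 ^ m := by
  rw [Nat.abs_cast]
  exact_mod_cast (Nat.lt_two_pow_self (n := m)).le

lemma bound_nat_mul {d : ℕ → ℝ} {K : ℝ} (hd : ∀ m, |d m| ≤ K ^ m / (Nat.factorial m)) (m : ℕ) :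
    |(m:ℝ) * d m| ≤ (2 * K) ^ m / (Nat.factorial m) :=
  bound_mul hd nat_le_two_pow m

lemma hasDerivAt_ser {d : ℕ → ℝ} {K : ℝ} (hd : ∀ m, |d m| ≤ K ^ m / (Nat.factorial m)) (t : ℝ) :
    HasDerivAt (fun s => ser d s) (ser (fun m => (m:ℝ) * d m) t) t := by
  have hmem : t ∈ Set.Ioo (t-1) (t+1) := by constructor <;> linarith
  apply hasDerivAt_tsum_of_isPreconnected
    (u := fun m : ℕ => ((m:ℝ) * |d m|) * Real.exp ((m:ℝ) * (t+1)))
    (g := fun (m : ℕ) (s : ℝ) => d m * Real.exp ((m:ℝ) * s))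
    (g' := fun (m : ℕ) (s : ℝ) => ((m:ℝ) * d m) * Real.exp ((m:ℝ) * s))
    ?_ (isOpen_Ioo (a := t-1) (b := t+1)) isPreconnected_Ioo ?_ ?_ hmem
    (summable_ser hd t) hmem
  · apply summable_ser (K := 2*K) (fun m => ?_) (t+1)
    simpa [abs_mul, abs_abs, Nat.abs_cast] using bound_nat_mul hd m
  · intro n y _
    have h1 : HasDerivAt (fun s : ℝ => (n:ℝ) * s) ((n:ℝ) * 1) y := (hasDerivAt_id y).const_mul _
    have h2 := (h1.exp).const_mul (d n)
    convert h2 using 1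
    · rfl
    ring
  · intro n y hy
    rw [Real.norm_eq_abs, abs_mul, abs_of_pos (Real.exp_pos _), abs_mul, Nat.abs_cast]
    apply mul_le_mul_of_nonneg_left
      (Real.exp_le_exp.2 (by nlinarith [hy.2, Nat.cast_nonneg (α := ℝ) n]))
      (by positivity)

lemma ser_const_mul (a : ℝ) (d : ℕ → ℝ) (t : ℝ) :
    ser (fun m => a * d m) t = a * ser d t := by
  unfold ser
  rw [← tsum_mul_left]
  exact tsum_congr fun m => by ring

lemma ser_add {d e : ℕ → ℝ} {t : ℝ}
    (hd : Summable (fun m : ℕ => d m * Real.exp ((m:ℝ)*t)))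
    (he : Summable (fun m : ℕ => e m * Real.exp ((m:ℝ)*t))) :
    ser (fun m => d m + e m) t = ser d t + ser e t := by
  unfold ser
  rw [← Summable.tsum_add hd he]
  exact tsum_congr fun m => by ring

lemma ser_shift {d e : ℕ → ℝ} (t : ℝ)
    (hs : Summable (fun m : ℕ => d m * Real.exp ((m:ℝ)*t)))
    (hd0 : d 0 = 0) (hde : ∀ m, d (m+1) = e m) :
    ser d t = Real.exp t * ser e t := by
  rw [ser, Summable.tsum_eq_zero_add hs, hd0]
  simp only [zero_mul, zero_add, Nat.cast_zero]
  rw [ser, ← tsum_mul_left]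
  apply tsum_congr; intro m
  rw [hde m]
  push_cast
  rw [show ((m:ℝ)+1)*t = t + (m:ℝ)*t by ring, Real.exp_add]
  ring

noncomputable def cc (z : ℝ) (m : ℕ) : ℝ := 1 / ((Nat.factorial m : ℝ)^2 * z^(2*m))

lemma cc_bound (z : ℝ) (hz : z ≠ 0) (m : ℕ) :
    |cc z m| ≤ ((z^2)⁻¹) ^ m / (Nat.factorial m) := by
  have hz2 : (0:ℝ) < z^2 := by positivity
  have hf : (1:ℝ) ≤ (Nat.factorial m : ℝ) := by exact_mod_cast m.factorial_pos
  have hp : (0:ℝ) < (z^2)^m := pow_pos hz2 m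
  calc |cc z m| = 1/(((Nat.factorial m:ℝ))^2*(z^2)^m) := by
        rw [cc, pow_mul, abs_of_pos (by positivity)]
    _ ≤ 1/((Nat.factorial m:ℝ)*(z^2)^m) :=
        one_div_le_one_div_of_le (by positivity) (by nlinarith [mul_le_mul_of_nonneg_right hf (le_of_lt hp)])
    _ = ((z^2)⁻¹)^m/(Nat.factorial m) := by
        rw [inv_pow]
        field_simp

lemma cc_succ (z : ℝ) (hz : z ≠ 0) (m : ℕ) :
    z^2 * (((m:ℝ)+1)^2 * cc z (m+1)) = cc z m := by
  have hf : (Nat.factorial m : ℝ) ≠ 0 := by exact_mod_cast m.factorial_ne_zero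
  have hm : ((m:ℝ)+1) ≠ 0 := by positivity
  rw [cc, cc, Nat.factorial_succ]
  push_cast
  field_simp
  ring

lemma Sk_eq (z t0 t1 : ℝ) :
    Sk z t0 t1 = (2 / z) * Real.exp (t0 / z) *
      ((t1 / 2) * ser (cc z) t1 - ser (fun m => harm m * cc z m) t1) := by
  rw [Sk, ser, ser]
  rw [show (∑' m : ℕ, Real.exp ((m:ℝ) * t1) / (((Nat.factorial m : ℝ)) ^ 2 * z ^ (2 * m)))
      = ∑' m : ℕ, cc z m * Real.exp ((m:ℝ)*t1) from tsum_congr fun m => by rw [cc]; ring]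
  rw [show (∑' m : ℕ, harm m * Real.exp ((m:ℝ) * t1) / (((Nat.factorial m : ℝ)) ^ 2 * z ^ (2 * m)))
      = ∑' m : ℕ, (harm m * cc z m) * Real.exp ((m:ℝ)*t1) from tsum_congr fun m => by rw [cc]; ring]

lemma harm_abs_le (m : ℕ) : |harm m| ≤ 2 ^ m := by
  have h0 : 0 ≤ harm m := Finset.sum_nonneg fun k _ => by positivity
  have h1 : harm m ≤ m := by
    calc harm m ≤ ∑ k ∈ Finset.range m, 1 := by
          apply Finset.sum_le_sum
          intro k _
          rw [div_le_one (by positivity)]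
          linarith [Nat.cast_nonneg (α := ℝ) k]
      _ = m := by simp
  rw [abs_of_nonneg h0]
  calc harm m ≤ (m:ℝ) := h1
    _ ≤ 2^m := by exact_mod_cast (Nat.lt_two_pow_self (n := m)).le

/-- For any fixed real `z ≠ 0`: the series converge for all real `t⁰, t¹`, and
`S` (the component `S₀₀` of the second flat section, built from the modified
Bessel function `K₀`) satisfies `z·∂S/∂t⁰ = S` and
`z·∂/∂t¹(z·∂S/∂t¹) = exp(t¹)·S`. -/
theorem stmt5 (z : ℝ) (hz : z ≠ 0) :
    (∀ t1 : ℝ,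
      Summable (fun m : ℕ =>
        Real.exp ((m : ℝ) * t1) / (((Nat.factorial m : ℝ)) ^ 2 * z ^ (2 * m))) ∧
      Summable (fun m : ℕ =>
        harm m * Real.exp ((m : ℝ) * t1) / (((Nat.factorial m : ℝ)) ^ 2 * z ^ (2 * m)))) ∧
    ∀ t0 t1 : ℝ,
      HasDerivAt (fun s => Sk z s t1) (Sk z t0 t1 / z) t0 ∧
      DifferentiableAt ℝ (fun s => Sk z t0 s) t1 ∧
      HasDerivAt (fun s => z * deriv (fun u => Sk z t0 u) s)
        (Real.exp t1 * Sk z t0 t1 / z) t1 := by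
  have hc := cc_bound z hz
  have hcB : ∀ m, |harm m * cc z m| ≤ (2 * (z^2)⁻¹) ^ m / (Nat.factorial m) :=
    bound_mul hc harm_abs_le
  have hcA1 := bound_nat_mul hc
  have hcA2 := bound_nat_mul hcA1
  have hcB1 := bound_nat_mul hcB
  have hcB2 := bound_nat_mul hcB1
  have hcP : ∀ m, |cc z m / ((m:ℝ)+1)| ≤ ((z^2)⁻¹) ^ m / (Nat.factorial m) := by
    intro m
    have hm : (1:ℝ) ≤ (m:ℝ)+1 := le_add_of_nonneg_left (Nat.cast_nonneg m)
    rw [abs_div, abs_of_pos (by positivity : (0:ℝ) < (m:ℝ)+1)]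
    calc |cc z m| / ((m:ℝ)+1) ≤ |cc z m| / 1 := by gcongr
      _ = |cc z m| := div_one _
      _ ≤ _ := hc m
  constructor
  · intro t1
    constructor
    · exact (summable_ser hc t1).congr fun m => by rw [cc]; ring
    · exact (summable_ser hcB t1).congr fun m => by rw [cc]; ring
  intro t0 t1
  -- series identities
  have hI1 : ∀ t : ℝ, z^2 * ser (fun m => (m:ℝ) * ((m:ℝ) * cc z m)) t
      = Real.exp t * ser (cc z) t := by
    intro t
    rw [← ser_const_mul]
    apply ser_shift t (((summable_ser hcA2 t).mul_left (z^2)).congr fun m => by ring)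
    · simp
    · intro m
      have h1 := cc_succ z hz m
      push_cast
      linear_combination h1
  have hI3 : ∀ t : ℝ, z^2 * ser (fun m => (m:ℝ) * cc z m) t
      = Real.exp t * ser (fun m => cc z m / ((m:ℝ)+1)) t := by
    intro t
    rw [← ser_const_mul]
    apply ser_shift t (((summable_ser hcA1 t).mul_left (z^2)).congr fun m => by ring)
    · simp
    · intro m
      have h1 := cc_succ z hz m
      have hm : ((m:ℝ)+1) ≠ 0 := by positivity
      push_cast
      field_simp
      linear_combination h1
  have hI2 : ∀ t : ℝ, z^2 * ser (fun m => (m:ℝ) * ((m:ℝ) * (harm m * cc z m))) t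
      = Real.exp t * (ser (fun m => harm m * cc z m) t + ser (fun m => cc z m / ((m:ℝ)+1)) t) := by
    intro t
    rw [← ser_add (summable_ser hcB t) (summable_ser hcP t), ← ser_const_mul]
    apply ser_shift t (((summable_ser hcB2 t).mul_left (z^2)).congr fun m => by ring)
    · simp
    · intro m
      have h1 := cc_succ z hz m
      have h2 : harm (m+1) = harm m + 1/((m:ℝ)+1) := by
        rw [harm, harm, Finset.sum_range_succ]
      push_cast
      rw [h2]
      linear_combination (harm m + 1/((m:ℝ)+1)) * h1
  -- termwise derivatives
  have hA : ∀ s : ℝ, HasDerivAt (fun u => ser (cc z) u)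
      (ser (fun m => (m:ℝ) * cc z m) s) s := fun s => hasDerivAt_ser hc s
  have hA1 : ∀ s : ℝ, HasDerivAt (fun u => ser (fun m => (m:ℝ) * cc z m) u)
      (ser (fun m => (m:ℝ) * ((m:ℝ) * cc z m)) s) s := fun s => hasDerivAt_ser hcA1 s
  have hB : ∀ s : ℝ, HasDerivAt (fun u => ser (fun m => harm m * cc z m) u)
      (ser (fun m => (m:ℝ) * (harm m * cc z m)) s) s := fun s => hasDerivAt_ser hcB s
  have hB1 : ∀ s : ℝ, HasDerivAt (fun u => ser (fun m => (m:ℝ) * (harm m * cc z m)) u)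
      (ser (fun m => (m:ℝ) * ((m:ℝ) * (harm m * cc z m))) s) s := fun s => hasDerivAt_ser hcB1 s
  set C : ℝ := 2 / z * Real.exp (t0 / z) with hCdef
  have hG : ∀ s : ℝ, HasDerivAt (fun u => Sk z t0 u)
      (C * (1/2 * ser (cc z) s + s/2 * ser (fun m => (m:ℝ) * cc z m) s
        - ser (fun m => (m:ℝ) * (harm m * cc z m)) s)) s := by
    intro s
    have h1 : HasDerivAt (fun u : ℝ => u/2) (1/2 : ℝ) s := by
      simpa using (hasDerivAt_id s).div_const 2
    have h2 := ((h1.mul (hA s)).sub (hB s)).const_mul C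
    have hfun : (fun u => Sk z t0 u)
        = fun u => C * (u/2 * ser (cc z) u - ser (fun m => harm m * cc z m) u) :=
      funext fun u => Sk_eq z t0 u
    rw [hfun]
    exact h2
  refine ⟨?_, (hG t1).differentiableAt, ?_⟩
  · have hfun : (fun s => Sk z s t1)
        = fun s => 2 / z * Real.exp (s / z) *
          ((t1/2) * ser (cc z) t1 - ser (fun m => harm m * cc z m) t1) :=
      funext fun s => Sk_eq z s t1
    rw [hfun]
    have h := (((hasDerivAt_id t0).div_const z).exp.const_mul (2/z)).mul_const
      ((t1/2) * ser (cc z) t1 - ser (fun m => harm m * cc z m) t1)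
    convert h using 1
    · rfl
    · rfl
    · rfl
    rw [Sk_eq]
    simp only [id_eq]
    ring
  · have hderiv : (fun s => z * deriv (fun u => Sk z t0 u) s)
        = fun s => z * C * (1/2 * ser (cc z) s + s/2 * ser (fun m => (m:ℝ) * cc z m) s
          - ser (fun m => (m:ℝ) * (harm m * cc z m)) s) := by
      funext s
      rw [(hG s).deriv]
      ring
    rw [hderiv]
    have h1 : HasDerivAt (fun u : ℝ => u/2) (1/2 : ℝ) t1 := by
      simpa using (hasDerivAt_id t1).div_const 2
    have h2 := ((((hA t1).const_mul (1/2 : ℝ)).add (h1.mul (hA1 t1))).sub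
      (hB1 t1)).const_mul (z * C)
    convert h2 using 1
    · rfl
    · rfl
    · rfl
    rw [Sk_eq, ← hCdef, div_eq_iff hz]
    linear_combination C * (hI2 t1 - hI3 t1 - (t1/2) * hI1 t1)
end
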